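/- Let ψ be the function defined in the context. Then ψ is four times differentiable on (0, 2l0), and for every r ∈ (0, 2l0) one has ψ'''(r) ≥ 0 and ψ''''(r) ≤ 0. -/

import Mathlib

open Set Filter MeasureTheory

/-- Lemma 4.1(2) of the paper: ψ is four times differentiable on (0, 2l0),
with ψ''' ≥ 0 and ψ'''' ≤ 0 there. -/
theorem stmt_1
    (l0 c1 c2 : ℝ) (hl0 : 0 < l0) (hc1 : 0 < c1) (hc2 : 0 < c2)
    (g ψ : ℝ → ℝ)
    (hg_cont : ContinuousOn g (Icc 0 (2 * l0)))
    (hg_smooth : ContDiffOn ℝ 3 g (Ioc 0 (2 * l0)))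
    (hg0 : g 0 = 0)
    (hg1 : ∀ r ∈ Ioc 0 (2 * l0), 0 ≤ deriv g r)
    (hg2 : ∀ r ∈ Ioc 0 (2 * l0), deriv (deriv g) r ≤ 0)
    (hg3 : ∀ r ∈ Ioc 0 (2 * l0), 0 ≤ deriv (deriv (deriv g)) r)
    (a b : ℝ)
    (ha : a = c1 + Real.exp (-(c2 * g (2 * l0))))
    (hb : b = -(c2 * deriv g (2 * l0) * Real.exp (-(c2 * g (2 * l0)))))
    (hψ1 : ∀ r ≤ 2 * l0, ψ r = c1 * r + ∫ s in (0:ℝ)..r, Real.exp (-(c2 * g s)))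
    (hψ2 : ∀ r, 2 * l0 < r →
      ψ r = ψ (2 * l0) + (a / 2) * ∫ s in (0:ℝ)..(r - 2 * l0), (1 + Real.exp ((2 * b / a) * s))) :
    ∀ r ∈ Ioo 0 (2 * l0),
      DifferentiableAt ℝ ψ r ∧ DifferentiableAt ℝ (deriv ψ) r ∧
      DifferentiableAt ℝ (deriv (deriv ψ)) r ∧
      DifferentiableAt ℝ (deriv (deriv (deriv ψ))) r ∧
      0 ≤ deriv (deriv (deriv ψ)) r ∧
      deriv (deriv (deriv (deriv ψ))) r ≤ 0 := by
  set U : Set ℝ := Ioo 0 (2 * l0) with hUdef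
  have hUopen : IsOpen U := isOpen_Ioo
  have hUsub : U ⊆ Ioc 0 (2 * l0) := Ioo_subset_Ioc_self
  have hgU : ContDiffOn ℝ 3 g U := hg_smooth.mono hUsub
  set G : ℝ → ℝ := fun s => Real.exp (-(c2 * g s)) with hGdef
  -- differentiability of g, g', g'' at points of U
  have hgd : ∀ r ∈ U, DifferentiableAt ℝ g r := fun r hr =>
    ((hgU.contDiffAt (hUopen.mem_nhds hr)).differentiableAt (by norm_num))
  have hg'U : ContDiffOn ℝ 2 (deriv g) U := hgU.deriv_of_isOpen hUopen (by norm_num)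
  have hg''U : ContDiffOn ℝ 1 (deriv (deriv g)) U := hg'U.deriv_of_isOpen hUopen (by norm_num)
  have hg'd : ∀ r ∈ U, DifferentiableAt ℝ (deriv g) r := fun r hr =>
    ((hg'U.contDiffAt (hUopen.mem_nhds hr)).differentiableAt (by norm_num))
  have hg''d : ∀ r ∈ U, DifferentiableAt ℝ (deriv (deriv g)) r := fun r hr =>
    ((hg''U.contDiffAt (hUopen.mem_nhds hr)).differentiableAt (by norm_num))
  -- derivative of G on U
  have hGd : ∀ r ∈ U, HasDerivAt G (-(c2 * deriv g r) * G r) r := by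
    intro r hr
    have h1 : HasDerivAt (fun s => -(c2 * g s)) (-(c2 * deriv g r)) r :=
      (((hgd r hr).hasDerivAt).const_mul c2).neg
    have := h1.exp
    simpa [hGdef, mul_comm] using this
  -- continuity of G
  have hGIcc : ContinuousOn G (Icc 0 (2 * l0)) := by
    exact Real.continuous_exp.comp_continuousOn ((continuousOn_const.mul hg_cont).neg)
  have hGcontAt : ∀ r ∈ U, ContinuousAt G r := fun r hr =>
    Real.continuous_exp.continuousAt.comp
      ((continuousAt_const.mul ((hgd r hr).continuousAt)).neg)
  -- the four "formula" functions
  set h1f : ℝ → ℝ := fun s => c1 + G s with h1def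
  set h2f : ℝ → ℝ := fun s => -(c2 * deriv g s) * G s with h2def
  set h3f : ℝ → ℝ := fun s =>
    (c2 ^ 2 * (deriv g s) ^ 2 - c2 * deriv (deriv g) s) * G s with h3def
  set h4f : ℝ → ℝ := fun s =>
    (-(c2 * deriv (deriv (deriv g)) s) + 3 * c2 ^ 2 * deriv g s * deriv (deriv g) s
      - c2 ^ 3 * (deriv g s) ^ 3) * G s with h4def
  -- ψ has derivative h1f on U
  have hψd : ∀ r ∈ U, HasDerivAt ψ (h1f r) r := by
    intro r hr
    have hψeq : ψ =ᶠ[nhds r] fun x => c1 * x + ∫ s in (0:ℝ)..x, G s :=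
      eventuallyEq_of_mem (Iio_mem_nhds hr.2) (fun x hx => hψ1 x (le_of_lt hx))
    have hInt : IntervalIntegrable G volume 0 r := by
      apply ContinuousOn.intervalIntegrable
      apply hGIcc.mono
      rw [uIcc_of_le hr.1.le]
      exact Icc_subset_Icc_right hr.2.le
    have hmeas : StronglyMeasurableAtFilter G (nhds r) volume :=
      ContinuousAt.stronglyMeasurableAtFilter hUopen hGcontAt r hr
    have hI : HasDerivAt (fun u => ∫ s in (0:ℝ)..u, G s) (G r) r :=
      intervalIntegral.integral_hasDerivAt_right hInt hmeas (hGcontAt r hr)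
    have hF : HasDerivAt (fun x => c1 * x + ∫ s in (0:ℝ)..x, G s) (h1f r) r := by
      have := ((hasDerivAt_id r).const_mul c1).fun_add hI
      simpa [h1def] using this
    exact hF.congr_of_eventuallyEq hψeq
  -- derivatives of the formula functions on U
  have h1d : ∀ r ∈ U, HasDerivAt h1f (h2f r) r := fun r hr => (hGd r hr).const_add c1
  have h2d : ∀ r ∈ U, HasDerivAt h2f (h3f r) r := by
    intro r hr
    have hu : HasDerivAt (fun s => -(c2 * deriv g s)) (-(c2 * deriv (deriv g) r)) r :=
      (((hg'd r hr).hasDerivAt).const_mul c2).neg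
    have := hu.fun_mul (hGd r hr)
    refine this.congr_deriv ?_
    simp only [h3def]; ring
  have h3d : ∀ r ∈ U, HasDerivAt h3f (h4f r) r := by
    intro r hr
    have q1 : HasDerivAt (fun s => (deriv g s) ^ 2)
        ((2:ℕ) * (deriv g r) ^ 1 * deriv (deriv g) r) r :=
      ((hg'd r hr).hasDerivAt).pow 2
    have hp : HasDerivAt (fun s => c2 ^ 2 * (deriv g s) ^ 2 - c2 * deriv (deriv g) s)
        (c2 ^ 2 * ((2:ℕ) * (deriv g r) ^ 1 * deriv (deriv g) r)
          - c2 * deriv (deriv (deriv g)) r) r :=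
      (q1.const_mul (c2 ^ 2)).sub (((hg''d r hr).hasDerivAt).const_mul c2)
    have := hp.fun_mul (hGd r hr)
    refine this.congr_deriv ?_
    simp only [h4def]
    push_cast
    ring
  -- propagate through iterated deriv via eventual equality
  have hψd2 : ∀ r ∈ U, HasDerivAt (deriv ψ) (h2f r) r := by
    intro r hr
    refine (h1d r hr).congr_of_eventuallyEq ?_
    exact eventuallyEq_of_mem (hUopen.mem_nhds hr) (fun x hx => (hψd x hx).deriv)
  have hψd3 : ∀ r ∈ U, HasDerivAt (deriv (deriv ψ)) (h3f r) r := by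
    intro r hr
    refine (h2d r hr).congr_of_eventuallyEq ?_
    exact eventuallyEq_of_mem (hUopen.mem_nhds hr) (fun x hx => (hψd2 x hx).deriv)
  have hψd4 : ∀ r ∈ U, HasDerivAt (deriv (deriv (deriv ψ))) (h4f r) r := by
    intro r hr
    refine (h3d r hr).congr_of_eventuallyEq ?_
    exact eventuallyEq_of_mem (hUopen.mem_nhds hr) (fun x hx => (hψd3 x hx).deriv)
  -- conclude
  intro r hr
  have hrIoc : r ∈ Ioc 0 (2 * l0) := hUsub hr
  have hGnn : 0 ≤ G r := Real.exp_nonneg _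
  refine ⟨(hψd r hr).differentiableAt, (hψd2 r hr).differentiableAt,
    (hψd3 r hr).differentiableAt, (hψd4 r hr).differentiableAt, ?_, ?_⟩
  · have h3eq : deriv (deriv (deriv ψ)) r = h3f r := (hψd3 r hr).deriv
    rw [h3eq, h3def]
    apply mul_nonneg _ hGnn
    have := hg2 r hrIoc
    nlinarith [sq_nonneg (c2 * deriv g r)]
  · have h4eq : deriv (deriv (deriv (deriv ψ))) r = h4f r := (hψd4 r hr).deriv
    rw [h4eq, h4def]
    apply mul_nonpos_of_nonpos_of_nonneg _ hGnn
    have e1 := hg1 r hrIoc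
    have e2 := hg2 r hrIoc
    have e3 := hg3 r hrIoc
    have t1 : 0 ≤ c2 * deriv (deriv (deriv g)) r := mul_nonneg hc2.le e3
    have t2 : 3 * c2 ^ 2 * deriv g r * deriv (deriv g) r ≤ 0 := by
      apply mul_nonpos_of_nonneg_of_nonpos _ e2
      positivity
    have t3 : 0 ≤ c2 ^ 3 * (deriv g r) ^ 3 := by positivity
    linarith
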